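/- With the same setup (strictly increasing (dₙ), multi-digits bₙ, ε > 0, 1/2 < α < 1, N > max{(1+ε)^{1/α}, ε^{1/(α−1)}}, multi-digit values B₁,…,B_{N²}), the set A(B₁,…,B_{N²},ε) := {x ∈ (0,1) : b_k(x)=B_k for k ≤ N², and 1 − ε/n^α ≤ C(x,n)/(2n+1) < 1 for all n ≥ N} is nonempty. -/

import Mathlib

/-- The `k`-th decimal digit of `x` (convention: the expansion ending in zeros). -/
noncomputable def digit (x : ℝ) (k : ℕ) : ℕ := (⌊x * 10 ^ k⌋ % 10).toNat

/-- `Dsum d n = d 1 + ⋯ + d n`, with `Dsum d 0 = 0`. -/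
def Dsum (d : ℕ → ℕ) (n : ℕ) : ℕ := ∑ k ∈ Finset.Icc 1 n, d k

/-- The `n`-th multi-digit of `x` with respect to the sequence `d`. -/
noncomputable def mdigit (d : ℕ → ℕ) (n : ℕ) (x : ℝ) : ℕ :=
  ∑ k ∈ Finset.Icc (Dsum d (n - 1) + 1) (Dsum d n), 10 ^ (Dsum d n - k) * digit x k

/-- The number of maximal multi-digits of `x` in the block `(n², (n+1)²]`. -/
noncomputable def Ccount (d : ℕ → ℕ) (x : ℝ) (n : ℕ) : ℕ :=
  ((Finset.Ioc (n ^ 2) ((n + 1) ^ 2)).filter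
    (fun k => mdigit d k x = 10 ^ (d k) - 1)).card

open Finset

/-! ### Auxiliary development -/

/-- Reconstruction of a natural number from its base-10 digits. -/
lemma recon_sum : ∀ (D m : ℕ), m < 10 ^ D →
    ∑ j ∈ range D, 10 ^ j * (m / 10 ^ j % 10) = m := by
  intro D
  induction D with
  | zero => intro m hm; simp at hm ⊢; omega
  | succ D ih =>
    intro m hm
    rw [Finset.sum_range_succ']
    have h1 : ∀ j : ℕ, 10 ^ (j + 1) * (m / 10 ^ (j + 1) % 10)
        = 10 * (10 ^ j * (m / 10 / 10 ^ j % 10)) := by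
      intro j
      rw [Nat.div_div_eq_div_mul, ← pow_succ']
      ring
    simp only [h1]
    rw [← Finset.mul_sum, ih (m / 10) (by
      rw [Nat.div_lt_iff_lt_mul (by norm_num)]
      calc m < 10 ^ (D + 1) := hm
        _ = 10 ^ D * 10 := by rw [pow_succ])]
    omega

section Expansion

variable (a : ℕ → ℕ)

/-- The real number with decimal digits `a 1, a 2, …`. -/
noncomputable def expReal : ℝ := ∑' k : ℕ, (a (k + 1) : ℝ) / 10 ^ (k + 1)

/-- The integer with digits `a 1 … a m`. -/
def Psum (m : ℕ) : ℕ := ∑ k ∈ Finset.Icc 1 m, a k * 10 ^ (m - k)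

lemma nine_eq (m k : ℕ) :
    (9 : ℝ) / 10 ^ (k + m + 1) = 9 / 10 ^ (m + 1) * (1 / 10) ^ k := by
  rw [div_pow, one_pow, pow_add, pow_add]
  field_simp
  ring

lemma summable_nine (m : ℕ) : Summable (fun k : ℕ => (9 : ℝ) / 10 ^ (k + m + 1)) := by
  simp only [nine_eq m]
  exact (summable_geometric_of_lt_one (by norm_num) (by norm_num)).mul_left _

lemma summable_exp (h9 : ∀ k, a k ≤ 9) (m : ℕ) :
    Summable (fun k : ℕ => (a (k + m + 1) : ℝ) / 10 ^ (k + m + 1)) := by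
  refine Summable.of_nonneg_of_le (fun k => by positivity) (fun k => ?_) (summable_nine m)
  apply div_le_div_of_nonneg_right _ (by positivity)
  · exact_mod_cast h9 _

lemma tsum_nine (m : ℕ) :
    ∑' k : ℕ, (9 : ℝ) / 10 ^ (k + m + 1) = (10 ^ m)⁻¹ := by
  simp only [nine_eq m]
  rw [tsum_mul_left, tsum_geometric_of_lt_one (by norm_num) (by norm_num), pow_succ]
  have h : ((1:ℝ) - 1 / 10)⁻¹ = 10 / 9 := by norm_num
  rw [h]
  have hp : (0:ℝ) < 10 ^ m := by positivity
  field_simp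

lemma tail_nonneg (m : ℕ) :
    0 ≤ ∑' k : ℕ, (a (k + m + 1) : ℝ) / 10 ^ (k + m + 1) :=
  tsum_nonneg fun k => by positivity

lemma tail_lt (h9 : ∀ k, a k ≤ 9) (hz : ∀ m, ∃ j, a (j + m + 1) = 0) (m : ℕ) :
    ∑' k : ℕ, (a (k + m + 1) : ℝ) / 10 ^ (k + m + 1) < (10 ^ m)⁻¹ := by
  obtain ⟨j, hj⟩ := hz m
  rw [← tsum_nine m]
  apply Summable.tsum_lt_tsum (i := j)
  · intro k
    apply div_le_div_of_nonneg_right _ (by positivity)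
    simpa using (Nat.cast_le (α := ℝ)).mpr (h9 (k + m + 1))
  · rw [hj]
    simp only [Nat.cast_zero, zero_div]
    positivity
  · exact summable_exp a h9 m
  · exact summable_nine m

lemma Psum_div (m : ℕ) : ((Psum a m : ℝ)) / 10 ^ m
    = ∑ i ∈ Finset.range m, (a (i + 1) : ℝ) / 10 ^ (i + 1) := by
  rw [Psum, Nat.cast_sum, Finset.sum_div, ← Finset.Ico_add_one_right_eq_Icc,
    Finset.sum_Ico_eq_sum_range]
  apply Finset.sum_congr (by norm_num)
  intro i hi
  rw [Finset.mem_range] at hi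
  have h1 : 1 + i = i + 1 := by omega
  rw [h1]
  push_cast
  rw [div_eq_div_iff (by positivity) (by positivity), mul_assoc, ← pow_add]
  have h2 : m - (i + 1) + (i + 1) = m := by omega
  rw [h2]

lemma expReal_split (h9 : ∀ k, a k ≤ 9) (m : ℕ) :
    expReal a = (Psum a m : ℝ) / 10 ^ m
      + ∑' k : ℕ, (a (k + m + 1) : ℝ) / 10 ^ (k + m + 1) := by
  have hsum := summable_exp a h9 0
  simp only [Nat.add_zero] at hsum
  rw [expReal,
    ← Summable.sum_add_tsum_nat_add (f := fun k : ℕ => (a (k + 1) : ℝ) / 10 ^ (k + 1)) m hsum,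
    Psum_div a m]

lemma floor_expReal (h9 : ∀ k, a k ≤ 9) (hz : ∀ m, ∃ j, a (j + m + 1) = 0) (m : ℕ) :
    ⌊expReal a * 10 ^ m⌋ = (Psum a m : ℤ) := by
  rw [Int.floor_eq_iff]
  have hsplit := expReal_split a h9 m
  have h0 := tail_nonneg a m
  have h1 := tail_lt a h9 hz m
  have hpow : (0:ℝ) < 10 ^ m := by positivity
  constructor
  · rw [hsplit]
    push_cast
    rw [add_mul, div_mul_cancel₀ _ (ne_of_gt hpow)]
    nlinarith
  · rw [hsplit]
    push_cast
    rw [add_mul, div_mul_cancel₀ _ (ne_of_gt hpow)]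
    have h2 : (∑' k : ℕ, (a (k + m + 1) : ℝ) / 10 ^ (k + m + 1)) * 10 ^ m < 1 := by
      have := mul_lt_mul_of_pos_right h1 hpow
      rwa [inv_mul_cancel₀ (ne_of_gt hpow)] at this
    linarith

lemma Psum_succ (m : ℕ) : Psum a (m + 1) = 10 * Psum a m + a (m + 1) := by
  rw [Psum, Finset.sum_Icc_succ_top (by omega)]
  simp only [Nat.sub_self, pow_zero, mul_one]
  congr 1
  rw [Psum, Finset.mul_sum]
  apply Finset.sum_congr rfl
  intro i hi
  rw [Finset.mem_Icc] at hi
  have h : m + 1 - i = (m - i) + 1 := by omega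
  rw [h, pow_succ]
  ring

lemma digit_expReal (h9 : ∀ k, a k ≤ 9) (hz : ∀ m, ∃ j, a (j + m + 1) = 0)
    (k : ℕ) (hk : 1 ≤ k) : digit (expReal a) k = a k := by
  obtain ⟨m, rfl⟩ : ∃ m, k = m + 1 := ⟨k - 1, by omega⟩
  rw [digit, floor_expReal a h9 hz]
  have h : ((Psum a (m+1) : ℤ) % 10) = ((Psum a (m+1) % 10 : ℕ) : ℤ) := by
    push_cast; ring
  rw [h, Int.toNat_natCast, Psum_succ, Nat.mul_add_mod]
  exact Nat.mod_eq_of_lt (by have := h9 (m+1); omega)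

end Expansion

/-- The index of the block (w.r.t. `Dsum d`) containing position `k`. -/
noncomputable def blockIdx (d : ℕ → ℕ) (k : ℕ) : ℕ := sInf {n | k ≤ Dsum d n}

lemma Dsum_mono (d : ℕ → ℕ) : Monotone (Dsum d) := by
  intro m n h
  exact Finset.sum_le_sum_of_subset (f := d) (Finset.Icc_subset_Icc_right h)

lemma Dsum_succ (d : ℕ → ℕ) (n : ℕ) (hn : 1 ≤ n) :
    Dsum d n = Dsum d (n - 1) + d n := by
  obtain ⟨m, rfl⟩ : ∃ m, n = m + 1 := ⟨n - 1, by omega⟩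
  rw [Dsum, Dsum, Finset.sum_Icc_succ_top (by omega)]
  simp

lemma le_Dsum (d : ℕ → ℕ) (hdpos : ∀ n, 1 ≤ n → 0 < d n) (n : ℕ) : n ≤ Dsum d n := by
  calc n = ∑ k ∈ Finset.Icc 1 n, 1 := by simp
    _ ≤ Dsum d n := Finset.sum_le_sum (fun i hi => hdpos i (Finset.mem_Icc.mp hi).1)

lemma blockIdx_eq (d : ℕ → ℕ) (n k : ℕ) (hn : 1 ≤ n)
    (h1 : Dsum d (n - 1) < k) (h2 : k ≤ Dsum d n) : blockIdx d k = n := by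
  have hne : n ∈ {m | k ≤ Dsum d m} := h2
  have hle : blockIdx d k ≤ n := Nat.sInf_le hne
  have hmem : blockIdx d k ∈ {m | k ≤ Dsum d m} := Nat.sInf_mem ⟨n, hne⟩
  by_contra hcon
  have hlt : blockIdx d k < n := lt_of_le_of_ne hle hcon
  have h3 : Dsum d (blockIdx d k) ≤ Dsum d (n - 1) := Dsum_mono d (by omega)
  have h4 : k ≤ Dsum d (n - 1) := le_trans hmem h3
  omega

/-- The digit sequence induced by the multi-digit values `mv`. -/
noncomputable def theA (d : ℕ → ℕ) (mv : ℕ → ℕ) (k : ℕ) : ℕ :=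
  mv (blockIdx d k) / 10 ^ (Dsum d (blockIdx d k) - k) % 10

lemma theA_le (d : ℕ → ℕ) (mv : ℕ → ℕ) (k : ℕ) : theA d mv k ≤ 9 := by
  have := Nat.mod_lt (mv (blockIdx d k) / 10 ^ (Dsum d (blockIdx d k) - k))
    (show 0 < 10 by norm_num)
  rw [theA]; omega

lemma mdigit_expReal (d : ℕ → ℕ) (mv : ℕ → ℕ)
    (hlt : ∀ n, 1 ≤ n → mv n < 10 ^ d n) (x : ℝ)
    (hx : ∀ k, 1 ≤ k → digit x k = theA d mv k)
    (n : ℕ) (hn : 1 ≤ n) : mdigit d n x = mv n := by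
  rw [mdigit]
  have hDsucc := Dsum_succ d n hn
  have hterm : ∀ k ∈ Finset.Icc (Dsum d (n - 1) + 1) (Dsum d n),
      10 ^ (Dsum d n - k) * digit x k
        = 10 ^ (Dsum d n - k) * (mv n / 10 ^ (Dsum d n - k) % 10) := by
    intro k hk
    rw [Finset.mem_Icc] at hk
    rw [hx k (by omega)]
    rw [theA, blockIdx_eq d n k hn (by omega) hk.2]
  rw [Finset.sum_congr rfl hterm]
  have hre : ∑ k ∈ Finset.Icc (Dsum d (n - 1) + 1) (Dsum d n),
      10 ^ (Dsum d n - k) * (mv n / 10 ^ (Dsum d n - k) % 10)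
      = ∑ j ∈ Finset.range (d n), 10 ^ j * (mv n / 10 ^ j % 10) := by
    apply Finset.sum_nbij' (i := fun k => Dsum d n - k) (j := fun j => Dsum d n - j)
    · intro k hk
      rw [Finset.mem_Icc] at hk
      rw [Finset.mem_range]
      omega
    · intro j hj
      rw [Finset.mem_range] at hj
      rw [Finset.mem_Icc]
      omega
    · intro k hk
      rw [Finset.mem_Icc] at hk
      omega
    · intro j hj
      rw [Finset.mem_range] at hj
      omega
    · intro k hk
      rfl
  rw [hre]
  exact recon_sum (d n) (mv n) (hlt n hn)

open Classical in
/-- The multi-digit values used in the construction. -/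
noncomputable def mvB (d : ℕ → ℕ) (N : ℕ) (B : ℕ → ℕ) (n : ℕ) : ℕ :=
  if n ≤ N ^ 2 then B n else if IsSquare n then 0 else 10 ^ (d n) - 1

theorem stmt11 (d : ℕ → ℕ) (hdpos : ∀ n, 1 ≤ n → 0 < d n)
    (hdmono : ∀ n, 1 ≤ n → d n < d (n + 1))
    (ε α : ℝ) (N : ℕ) (B : ℕ → ℕ)
    (hε : 0 < ε) (hα1 : 1 / 2 < α) (hα2 : α < 1)
    (hN : (N : ℝ) > max ((1 + ε) ^ (1 / α)) (ε ^ (1 / (α - 1))))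
    (hB : ∀ k, 1 ≤ k → k ≤ N ^ 2 → B k ≤ 10 ^ (d k) - 1) :
    Set.Nonempty {x : ℝ | x ∈ Set.Ioo (0 : ℝ) 1 ∧
      (∀ k, 1 ≤ k → k ≤ N ^ 2 → mdigit d k x = B k) ∧
      ∀ n : ℕ, N ≤ n →
        1 - ε / (n : ℝ) ^ α ≤ (Ccount d x n : ℝ) / (2 * n + 1) ∧
        (Ccount d x n : ℝ) / (2 * n + 1) < 1} := by
  classical
  -- N ≥ 2
  have hα0 : (0:ℝ) < α := by linarith
  have hN1 : (1:ℝ) < (N : ℝ) := by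
    have h1 : (1:ℝ) < (1 + ε) ^ (1 / α) := by
      rw [Real.one_lt_rpow_iff_of_pos (by linarith)]
      left
      constructor <;> [linarith; positivity]
    calc (1:ℝ) < (1 + ε) ^ (1 / α) := h1
      _ ≤ max ((1 + ε) ^ (1 / α)) (ε ^ (1 / (α - 1))) := le_max_left _ _
      _ < N := hN
  have hN2 : 2 ≤ N := by exact_mod_cast Nat.one_lt_cast.mp hN1
  set mv := mvB d N B with hmv
  -- basic facts about mv
  have hmvlt : ∀ n, 1 ≤ n → mv n < 10 ^ d n := by
    intro n hn
    have hp : 0 < 10 ^ d n := Nat.pow_pos (by norm_num)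
    rw [hmv, mvB]
    split_ifs with h1 h2
    · have := hB n hn h1; omega
    · omega
    · omega
  have hmv_nonsq : ∀ n, N ^ 2 < n → ¬ IsSquare n → mv n = 10 ^ d n - 1 := by
    intro n h1 h2
    rw [hmv, mvB, if_neg (by omega), if_neg h2]
  have hmv_sq : ∀ n, N ^ 2 < n → IsSquare n → mv n = 0 := by
    intro n h1 h2
    rw [hmv, mvB, if_neg (by omega), if_pos h2]
  set a := theA d mv with ha
  have h9 : ∀ k, a k ≤ 9 := theA_le d mv
  -- the digit at the end of block s is (mv s) % 10
  have ha_end : ∀ s, 1 ≤ s → a (Dsum d s) = mv s % 10 := by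
    intro s hs
    have hd : 0 < d s := hdpos s hs
    have hsucc := Dsum_succ d s hs
    have hbi : blockIdx d (Dsum d s) = s :=
      blockIdx_eq d s (Dsum d s) hs (by omega) le_rfl
    rw [ha, theA, hbi, Nat.sub_self, pow_zero, Nat.div_one]
  -- zeros at every square block beyond N²
  have hz : ∀ m, ∃ j, a (j + m + 1) = 0 := by
    intro m
    set t := max N m with ht
    set s := (t + 1) ^ 2 with hs
    have hts : t + 1 ≤ s := hs ▸ Nat.le_self_pow (by norm_num) _
    have hs1 : 1 ≤ s := by omega
    have hsN : N ^ 2 < s := by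
      have h1 : N ≤ t := le_max_left _ _
      exact Nat.pow_lt_pow_left (by omega) (by norm_num)
    have hssq : IsSquare s := ⟨t + 1, by rw [hs]; ring⟩
    have hK : m < Dsum d s := by
      have h1 : s ≤ Dsum d s := le_Dsum d hdpos s
      have h2 : m ≤ t := le_max_right _ _
      omega
    refine ⟨Dsum d s - m - 1, ?_⟩
    have heq : Dsum d s - m - 1 + m + 1 = Dsum d s := by omega
    rw [heq, ha_end s hs1, hmv_sq s hsN hssq]
  -- the constructed real
  set x := expReal a with hx
  have hdig : ∀ k, 1 ≤ k → digit x k = a k := fun k hk =>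
    digit_expReal a h9 hz k hk
  have hmd : ∀ n, 1 ≤ n → mdigit d n x = mv n := by
    intro n hn
    exact mdigit_expReal d mv hmvlt x (fun k hk => by rw [hdig k hk]) n hn
  -- x ∈ (0,1)
  have hx1 : x < 1 := by
    have hsplit := expReal_split a h9 0
    have htl := tail_lt a h9 hz 0
    have h0 : (Psum a 0 : ℝ) / 10 ^ 0 = 0 := by simp [Psum]
    rw [hx, hsplit, h0, zero_add]
    simpa using htl
  have hx0 : 0 < x := by
    -- find a digit equal to 9
    set s0 := N ^ 2 + 1 with hs0
    have hs0N : N ^ 2 < s0 := by omega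
    have hs0sq : ¬ IsSquare s0 := by
      rintro ⟨r, hr⟩
      have h1 : N * N < r * r := by
        have h2 : N ^ 2 < r * r := by omega
        nlinarith
      have h2 : r * r < (N + 1) * (N + 1) := by nlinarith
      have h3 : N < r := by nlinarith
      have h4 : r < N + 1 := by nlinarith
      omega
    have hs01 : 1 ≤ s0 := by omega
    have hds0 : 1 ≤ d s0 := hdpos s0 hs01
    have h9dig : a (Dsum d s0) = 9 := by
      rw [ha_end s0 hs01, hmv_nonsq s0 hs0N hs0sq]
      obtain ⟨D, hD⟩ : ∃ D, d s0 = D + 1 := ⟨d s0 - 1, by omega⟩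
      rw [hD, pow_succ]
      have hp : 0 < 10 ^ D := Nat.pow_pos (by norm_num)
      omega
    set K := Dsum d s0 with hK
    have hK1 : 1 ≤ K := by
      have := le_Dsum d hdpos s0; omega
    have hsum := summable_exp a h9 0
    simp only [Nat.add_zero] at hsum
    have hterm : (a ((K - 1) + 1) : ℝ) / 10 ^ ((K - 1) + 1) ≤ x := by
      rw [hx, expReal]
      exact Summable.le_tsum hsum (K - 1) (fun j _ => by positivity)
    have hKeq : K - 1 + 1 = K := by omega
    rw [hKeq] at hterm
    have hpos : (0:ℝ) < (a K : ℝ) / 10 ^ K := by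
      rw [h9dig]
      positivity
    linarith
  -- key inequality : n^α < ε * n for n ≥ N
  have hkey : ∀ n : ℕ, N ≤ n → (n : ℝ) ^ α < ε * n := by
    intro n hn
    have hn0 : (0:ℝ) < n := by
      have : (1:ℝ) < n := lt_of_lt_of_le hN1 (by exact_mod_cast hn)
      linarith
    have hεp : (0:ℝ) < ε ^ (1 / (α - 1)) := Real.rpow_pos_of_pos hε _
    have hlt : ε ^ (1 / (α - 1)) < (n : ℝ) := by
      calc ε ^ (1 / (α - 1)) ≤ max ((1 + ε) ^ (1 / α)) (ε ^ (1 / (α - 1))) :=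
            le_max_right _ _
        _ < N := hN
        _ ≤ n := by exact_mod_cast hn
    have hneg : α - 1 < 0 := by linarith
    have h2 : (n : ℝ) ^ (α - 1) < (ε ^ (1 / (α - 1))) ^ (α - 1) :=
      Real.rpow_lt_rpow_of_neg hεp hlt hneg
    have h3 : (ε ^ (1 / (α - 1))) ^ (α - 1) = ε := by
      rw [← Real.rpow_mul (le_of_lt hε), one_div,
        inv_mul_cancel₀ (by linarith : α - 1 ≠ 0), Real.rpow_one]
    rw [h3] at h2
    have h4 : (n : ℝ) ^ α = (n : ℝ) ^ (α - 1) * n := by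
      rw [← Real.rpow_add_one (ne_of_gt hn0)]
      ring_nf
    rw [h4]
    have h5 : (0:ℝ) < (n:ℝ) ^ (α - 1) := Real.rpow_pos_of_pos hn0 _
    nlinarith
  refine ⟨x, ⟨hx0, hx1⟩, ?_, ?_⟩
  · intro k hk hkN
    rw [hmd k hk, hmv, mvB, if_pos hkN]
  · intro n hn
    have hnN : 2 ≤ n := le_trans hN2 hn
    -- compute Ccount = 2n
    have hsq : n ^ 2 < (n + 1) ^ 2 := Nat.pow_lt_pow_left (by omega) (by norm_num)
    have hC : Ccount d x n = 2 * n := by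
      rw [Ccount]
      have hfe : (Finset.Ioc (n ^ 2) ((n + 1) ^ 2)).filter
          (fun k => mdigit d k x = 10 ^ (d k) - 1)
          = (Finset.Ioc (n ^ 2) ((n + 1) ^ 2)).filter (fun k => k ≠ (n + 1) ^ 2) := by
        apply Finset.filter_congr
        intro k hk
        rw [Finset.mem_Ioc] at hk
        have hn2 : 0 < n ^ 2 := pow_pos (by omega) 2
        have hk1 : 1 ≤ k := by omega
        have hkN2 : N ^ 2 < k := by
          have := Nat.pow_le_pow_left hn 2
          omega
        rw [hmd k hk1]
        have hd1 : 1 ≤ d k := hdpos k hk1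
        have h10 : 9 ≤ 10 ^ d k - 1 := by
          obtain ⟨D, hD⟩ : ∃ D, d k = D + 1 := ⟨d k - 1, by omega⟩
          rw [hD, pow_succ]
          have hp : 0 < 10 ^ D := Nat.pow_pos (by norm_num)
          omega
        constructor
        · intro hmax hkeq
          subst hkeq
          rw [hmv_sq _ (by omega) ⟨n+1, by ring⟩] at hmax
          omega
        · intro hne
          apply hmv_nonsq k hkN2
          rintro ⟨r, hr⟩
          have hk1' : n * n < r * r := by
            calc n * n = n ^ 2 := (pow_two n).symm
              _ < k := hk.1
              _ = r * r := hr
          have h1 : n < r := by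
            by_contra hcon
            push_neg at hcon
            exact absurd hk1' (not_lt.mpr (Nat.mul_le_mul hcon hcon))
          have h2 : r < n + 1 := by
            by_contra hcon
            push_neg at hcon
            have h3 : (n+1)*(n+1) ≤ r * r := Nat.mul_le_mul hcon hcon
            have h4 : k = (n+1)^2 := by
              have h5 : (n+1)^2 ≤ k := by
                calc (n+1)^2 = (n+1)*(n+1) := pow_two _
                  _ ≤ r * r := h3
                  _ = k := hr.symm
              omega
            exact hne h4
          omega
      rw [hfe]
      have herase : (Finset.Ioc (n ^ 2) ((n + 1) ^ 2)).filter (fun k => k ≠ (n + 1) ^ 2)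
          = (Finset.Ioc (n ^ 2) ((n + 1) ^ 2)).erase ((n + 1) ^ 2) := by
        ext k
        simp only [Finset.mem_filter, Finset.mem_erase]
        tauto
      rw [herase, Finset.card_erase_of_mem (by rw [Finset.mem_Ioc]; exact ⟨hsq, le_refl _⟩),
        Nat.card_Ioc]
      have hb : (n + 1) ^ 2 = n ^ 2 + 2 * n + 1 := by ring
      omega
    rw [hC]
    have hn0 : (0:ℝ) < n := by positivity
    have h2n1 : (0:ℝ) < 2 * (n:ℝ) + 1 := by positivity
    have hna : (0:ℝ) < (n:ℝ) ^ α := Real.rpow_pos_of_pos (by positivity) _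
    have hkn := hkey n hn
    constructor
    · -- 1 - ε/n^α ≤ 2n/(2n+1)
      have h1 : 1 / (2 * (n:ℝ) + 1) ≤ ε / (n:ℝ) ^ α := by
        rw [div_le_div_iff₀ h2n1 hna]
        nlinarith
      have h2 : ((2 * n : ℕ) : ℝ) / (2 * (n:ℝ) + 1) = 1 - 1 / (2 * (n:ℝ) + 1) := by
        push_cast
        field_simp
        ring
      rw [h2]
      linarith
    · rw [div_lt_one h2n1]
      push_cast
      linarith
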